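/- Let A be a Hermitian n×n matrix, let w_1, …, w_m ∈ ℂ^n with probabilities p_1, …, p_m > 0, ∑_i p_i = 1, and suppose ∑_i p_i w_i w_i* = cI for some constant c ≥ 0. Then ∑_{i=1}^m p_i · det(xI − A − w_i w_i*) = (1 − cD) χ[A](x), where χ[A](x) = det(xI − A). -/

import Mathlib

open Polynomial Matrix

/-- The rank-one outer product `v v*`. -/
noncomputable def outer {n : ℕ} (v : Fin n → ℂ) : Matrix (Fin n) (Fin n) ℂ :=
  Matrix.vecMulVec v (star v)

lemma eval_charpoly' {n : ℕ} (M : Matrix (Fin n) (Fin n) ℂ) (x : ℂ) :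
    (M.charpoly).eval x = (x • (1 : Matrix (Fin n) (Fin n) ℂ) - M).det := by
  have h := RingHom.map_det (evalRingHom x) M.charmatrix
  rw [Matrix.charpoly, show eval x M.charmatrix.det = (evalRingHom x) M.charmatrix.det from rfl,
    h]
  congr 1
  ext i j
  by_cases h : i = j <;>
    simp [h, charmatrix_apply, Matrix.one_apply, diagonal_apply]

lemma jacobi' {n : ℕ} (A : Matrix (Fin n) (Fin n) ℂ) (x : ℂ)
    (hM : IsUnit (x • (1 : Matrix (Fin n) (Fin n) ℂ) - A).det) :
    (Polynomial.derivative A.charpoly).eval x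
      = (x • (1 : Matrix (Fin n) (Fin n) ℂ) - A).det
        * Matrix.trace (x • (1 : Matrix (Fin n) (Fin n) ℂ) - A)⁻¹ := by
  set M := x • (1 : Matrix (Fin n) (Fin n) ℂ) - A with hMdef
  set q := A.charpoly.comp (X + C x) with hq
  have h1 : (Polynomial.derivative q).eval 0 = (Polynomial.derivative A.charpoly).eval x := by
    rw [hq, Polynomial.derivative_comp]
    simp
  have h2 : q = Matrix.det ((X : ℂ[X]) • (1 : Matrix (Fin n) (Fin n) ℂ[X]) + M.map C) := by
    rw [hq, comp_eq_aeval, Matrix.charpoly, AlgHom.map_det]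
    congr 1
    ext i j
    by_cases h : i = j <;>
      simp [h, charmatrix_apply, diagonal_apply, Matrix.one_apply, hMdef, mul_comm]
    ring
  have hfact : (X : ℂ[X]) • (1 : Matrix (Fin n) (Fin n) ℂ[X]) + M.map C
      = M.map C * (1 + (X : ℂ[X]) • (M⁻¹).map C) := by
    rw [Matrix.mul_add, Matrix.mul_one, Matrix.mul_smul, ← Matrix.map_mul,
      Matrix.mul_nonsing_inv _ hM, Matrix.map_one _ (map_zero C) (map_one C), add_comm]
  have h3 : q = C M.det * Matrix.det (1 + (X : ℂ[X]) • (M⁻¹).map C) := by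
    rw [h2, hfact, Matrix.det_mul]
    congr 1
    exact (RingHom.map_det C M).symm
  rw [← h1, h3]
  simp [Matrix.derivative_det_one_add_X_smul]

lemma trace_mul_outer {n : ℕ} (N : Matrix (Fin n) (Fin n) ℂ) (v : Fin n → ℂ) :
    Matrix.trace (N * outer v) = star v ⬝ᵥ N.mulVec v := by
  simp only [outer, Matrix.trace, Matrix.diag, Matrix.mul_apply, vecMulVec_apply, dotProduct,
    Matrix.mulVec, Pi.star_apply, Finset.mul_sum]
  exact Finset.sum_congr rfl fun i _ => Finset.sum_congr rfl fun j _ => by ring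

lemma det_sub_outer {n : ℕ} (M : Matrix (Fin n) (Fin n) ℂ) (hM : IsUnit M.det)
    (v : Fin n → ℂ) :
    (M - outer v).det = M.det * (1 - star v ⬝ᵥ M⁻¹.mulVec v) := by
  have h : M - outer v = M + replicateCol Unit (-v) * replicateRow Unit (star v) := by
    ext i j
    simp [outer, Matrix.mul_apply, vecMulVec_apply, sub_eq_add_neg]
  rw [h, Matrix.det_add_replicateCol_mul_replicateRow hM]
  congr 1
  rw [Matrix.det_unique]
  have key : (replicateRow Unit (star v) * M⁻¹ * replicateCol Unit (-v)) default default
      = -(star v ⬝ᵥ M⁻¹.mulVec v) := by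
    simp only [Matrix.mul_apply, dotProduct, Matrix.mulVec, replicateRow_apply, replicateCol_apply,
      Pi.neg_apply, Finset.mul_sum, Finset.sum_mul, Finset.univ_unique, Finset.sum_singleton,
      ← Finset.sum_neg_distrib]
    rw [Finset.sum_comm]
    exact Finset.sum_congr rfl fun i _ => Finset.sum_congr rfl fun j _ => by ring
  simp [key, sub_eq_add_neg]

/-- **Isotropic rank-one updates correspond to `(1 - cD)` operators.**
If a random vector takes value `w i` with probability `p i > 0`,
`∑ᵢ pᵢ = 1`, and `E[v v*] = ∑ᵢ pᵢ wᵢ wᵢ* = c I` for some `c ≥ 0`, then for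
any Hermitian `A`,
`E χ[A + v v*](x) = ∑ᵢ pᵢ det(xI - A - wᵢ wᵢ*) = (1 - cD) χ[A](x)`. -/
theorem expected_rank_one_update_eq_oneSubD
    {n m : ℕ} (A : Matrix (Fin n) (Fin n) ℂ) (hA : A.IsHermitian)
    (w : Fin m → (Fin n → ℂ)) (p : Fin m → ℝ)
    (hp : ∀ i, 0 < p i) (hp1 : ∑ i, p i = 1)
    (c : ℝ) (hc : 0 ≤ c)
    (hcov : ∑ i, p i • outer (w i) = c • (1 : Matrix (Fin n) (Fin n) ℂ)) :
    ∑ i, ((p i : ℂ)) • (A + outer (w i)).charpoly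
      = A.charpoly - (c : ℂ) • Polynomial.derivative A.charpoly := by
  apply Polynomial.eq_of_infinite_eval_eq
  have hfin : {x : ℂ | A.charpoly.IsRoot x}.Finite :=
    Polynomial.finite_setOf_isRoot A.charpoly_monic.ne_zero
  have hinf : ({x : ℂ | A.charpoly.IsRoot x}ᶜ : Set ℂ).Infinite :=
    hfin.infinite_compl
  apply hinf.mono
  intro x hx
  have hx' : A.charpoly.eval x ≠ 0 := hx
  set M := x • (1 : Matrix (Fin n) (Fin n) ℂ) - A with hMdef
  have hdet : M.det = A.charpoly.eval x := (eval_charpoly' A x).symm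
  have hM : IsUnit M.det := isUnit_iff_ne_zero.mpr (by rw [hdet]; exact hx')
  have hsum : ∑ i, (p i : ℂ) * (star (w i) ⬝ᵥ M⁻¹.mulVec (w i))
      = (c : ℂ) * Matrix.trace M⁻¹ := by
    have step : ∀ i, (p i : ℂ) * (star (w i) ⬝ᵥ M⁻¹.mulVec (w i))
        = Matrix.trace (M⁻¹ * (p i • outer (w i))) := by
      intro i
      rw [Matrix.mul_smul, Matrix.trace_smul, trace_mul_outer, Complex.real_smul]
    rw [Finset.sum_congr rfl fun i _ => step i, ← Matrix.trace_sum, ← Matrix.mul_sum, hcov,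
      Matrix.mul_smul, Matrix.mul_one, Matrix.trace_smul, Complex.real_smul]
  -- evaluate both sides
  show Polynomial.eval x _ = Polynomial.eval x _
  rw [Polynomial.eval_finset_sum, Polynomial.eval_sub, Polynomial.eval_smul,
    smul_eq_mul, jacobi' A x hM, eval_charpoly' A x]
  have hLHS : ∀ i, ((p i : ℂ) • (A + outer (w i)).charpoly).eval x
      = (p i : ℂ) * (M.det * (1 - star (w i) ⬝ᵥ M⁻¹.mulVec (w i))) := by
    intro i
    rw [Polynomial.eval_smul, smul_eq_mul, eval_charpoly',
      show x • (1 : Matrix (Fin n) (Fin n) ℂ) - (A + outer (w i)) = M - outer (w i) by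
        rw [hMdef]; abel,
      det_sub_outer M hM (w i)]
  rw [Finset.sum_congr rfl fun i _ => hLHS i]
  have hpc : ∑ i, (p i : ℂ) = 1 := by exact_mod_cast hp1
  have expand : ∀ i, (p i : ℂ) * (M.det * (1 - star (w i) ⬝ᵥ M⁻¹.mulVec (w i)))
      = (p i : ℂ) * M.det - M.det * ((p i : ℂ) * (star (w i) ⬝ᵥ M⁻¹.mulVec (w i))) := by
    intro i; ring
  rw [Finset.sum_congr rfl fun i _ => expand i, Finset.sum_sub_distrib, ← Finset.sum_mul,
    ← Finset.mul_sum, hpc, hsum]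
  rw [← hMdef]
  ring
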